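/- Transitivity of parallel reduction through refinement: if L₁ refines L₂ (for preservation of reduction) and T₁ reduces to T₂ in one parallel step in L₂, then T₁ reduces to T₂ in one parallel step in L₁. -/
import Mathlib


inductive Bk | abbr | abst
deriving DecidableEq

inductive Fk | appl | cast
deriving DecidableEq

inductive Tm
| sort : Nat → Tm
| lref : Nat → Tm
| bind : Bk → Tm → Tm → Tm
| flat : Fk → Tm → Tm → Tm
deriving DecidableEq

inductive Lift : Nat → Nat → Tm → Tm → Prop
| sort (l m k) : Lift l m (.sort k) (.sort k)
| lt {l m i} : i < l → Lift l m (.lref i) (.lref i)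
| ge {l m i} : l ≤ i → Lift l m (.lref i) (.lref (i + m))
| bind {l m b W₁ W₂ T₁ T₂} : Lift l m W₁ W₂ → Lift (l + 1) m T₁ T₂ →
    Lift l m (.bind b W₁ T₁) (.bind b W₂ T₂)
| flat {l m f V₁ V₂ T₁ T₂} : Lift l m V₁ V₂ → Lift l m T₁ T₂ →
    Lift l m (.flat f V₁ T₁) (.flat f V₂ T₂)

inductive Env
| null : Env
| pair : Env → Bk → Tm → Env
deriving DecidableEq

inductive Drop : Nat → Nat → Env → Env → Prop
| atom (l) : Drop l 0 .null .null
| pair {L₁ L₂ b W} : Drop 0 0 L₁ L₂ → Drop 0 0 (.pair L₁ b W) (.pair L₂ b W)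
| drop {m L₁ L₂ b W} : Drop 0 m L₁ L₂ → Drop 0 (m + 1) (.pair L₁ b W) L₂
| skip {l m L₁ L₂ b W₁ W₂} : Drop l m L₁ L₂ → Lift l m W₂ W₁ →
    Drop (l + 1) m (.pair L₁ b W₁) (.pair L₂ b W₂)

inductive Cpr : Env → Tm → Tm → Prop
| sort {L k} : Cpr L (.sort k) (.sort k)
| lref {L i} : Cpr L (.lref i) (.lref i)
| bind {L b W₁ W₂ T₁ T₂} : Cpr L W₁ W₂ → Cpr (.pair L b W₁) T₁ T₂ →
    Cpr L (.bind b W₁ T₁) (.bind b W₂ T₂)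
| flat {L f V₁ V₂ T₁ T₂} : Cpr L V₁ V₂ → Cpr L T₁ T₂ →
    Cpr L (.flat f V₁ T₁) (.flat f V₂ T₂)
| delta {L K V₁ V₂ W₂ i} : Drop 0 i L (.pair K .abbr V₁) → Cpr K V₁ V₂ →
    Lift 0 (i + 1) V₂ W₂ → Cpr L (.lref i) W₂
| beta {L V₁ V₂ W₁ W₂ T₁ T₂} : Cpr L V₁ V₂ → Cpr L W₁ W₂ →
    Cpr (.pair L .abst W₁) T₁ T₂ →
    Cpr L (.flat .appl V₁ (.bind .abst W₁ T₁)) (.bind .abbr (.flat .cast W₂ V₂) T₂)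
| zeta {L V U₁ U₂ T₂} : Cpr (.pair L .abbr V) U₁ U₂ → Lift 0 1 T₂ U₂ →
    Cpr L (.bind .abbr V U₁) T₂
| eps {L U T₁ T₂} : Cpr L T₁ T₂ → Cpr L (.flat .cast U T₁) T₂
| theta {L V₁ V₂ W₂ U₁ U₂ T₁ T₂} : Cpr L V₁ V₂ → Lift 0 1 V₂ W₂ → Cpr L U₁ U₂ →
    Cpr (.pair L .abbr U₁) T₁ T₂ →
    Cpr L (.flat .appl V₁ (.bind .abbr U₁ T₁)) (.bind .abbr U₂ (.flat .appl W₂ T₂))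

inductive Lpr : Env → Env → Prop
| atom : Lpr .null .null
| pair {L₁ L₂ b W₁ W₂} : Lpr L₁ L₂ → Cpr L₁ W₁ W₂ → Lpr (.pair L₁ b W₁) (.pair L₂ b W₂)

inductive LsubR : Env → Env → Prop
| atom (L) : LsubR L .null
| pair {L₁ L₂ b W} : LsubR L₁ L₂ → LsubR (.pair L₁ b W) (.pair L₂ b W)
| beta {L₁ L₂ W V} : LsubR L₁ L₂ →
    LsubR (.pair L₁ .abbr (.flat .cast W V)) (.pair L₂ .abst W)


lemma lift_zero_eq' : ∀ {l m T₁ T₂}, Lift l m T₁ T₂ → m = 0 → T₁ = T₂ := by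
  intro l m T₁ T₂ h
  induction h with
  | sort => intro; rfl
  | lt => intro; rfl
  | ge => intro hm; subst hm; rfl
  | bind _ _ ih1 ih2 => intro hm; rw [ih1 hm, ih2 hm]
  | flat _ _ ih1 ih2 => intro hm; rw [ih1 hm, ih2 hm]

lemma lift_zero_eq {l T₁ T₂} (h : Lift l 0 T₁ T₂) : T₁ = T₂ := lift_zero_eq' h rfl

lemma drop_zero_eq : ∀ {l m L₁ L₂}, Drop l m L₁ L₂ → m = 0 → L₁ = L₂ := by
  intro l m L₁ L₂ h
  induction h with
  | atom => intro; rfl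
  | pair _ ih => intro hm; rw [ih hm]
  | drop => omega
  | skip _ hl ih => intro hm; subst hm; rw [ih rfl, lift_zero_eq hl]

lemma drop00_refl : ∀ L, Drop 0 0 L L := by
  intro L
  induction L with
  | null => exact .atom 0
  | pair _ _ _ ih => exact .pair ih

lemma lsubr_drop_abbr : ∀ {L₁ L₂}, LsubR L₁ L₂ → ∀ {i K₂ V},
    Drop 0 i L₂ (.pair K₂ .abbr V) →
    ∃ K₁, Drop 0 i L₁ (.pair K₁ .abbr V) ∧ LsubR K₁ K₂ := by
  intro L₁ L₂ h
  induction h with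
  | atom => intro i K₂ V hd; nomatch hd
  | pair hs ih =>
    intro i K₂ V hd
    cases hd with
    | pair hd0 =>
      refine ⟨_, Drop.pair (drop00_refl _), ?_⟩
      have := drop_zero_eq hd0 rfl; subst this; exact hs
    | drop hd =>
      obtain ⟨K₁, h1, h2⟩ := ih hd
      exact ⟨K₁, Drop.drop h1, h2⟩
  | beta hs ih =>
    intro i K₂ V hd
    cases hd with
    | drop hd =>
      obtain ⟨K₁, h1, h2⟩ := ih hd
      exact ⟨K₁, Drop.drop h1, h2⟩

theorem lsubr_cpr_trans {L₁ L₂ : Env} {T₁ T₂ : Tm}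
    (h : LsubR L₁ L₂) (hc : Cpr L₂ T₁ T₂) : Cpr L₁ T₁ T₂ := by
  induction hc generalizing L₁ with
  | sort => exact .sort
  | lref => exact .lref
  | bind _ _ ih1 ih2 => exact .bind (ih1 h) (ih2 (h.pair))
  | flat _ _ ih1 ih2 => exact .flat (ih1 h) (ih2 h)
  | delta hd _ hl ih =>
    obtain ⟨K₁, h1, h2⟩ := lsubr_drop_abbr h hd
    exact .delta h1 (ih h2) hl
  | beta _ _ _ ih1 ih2 ih3 => exact .beta (ih1 h) (ih2 h) (ih3 h.pair)
  | zeta _ hl ih => exact .zeta (ih h.pair) hl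
  | eps _ ih => exact .eps (ih h)
  | theta _ hl _ _ ih1 ih2 ih3 => exact .theta (ih1 h) hl (ih2 h) (ih3 h.pair)
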